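/- arXiv:0712.2387 — 3 statements merged into one kernel-verified Lean document; each statement's English description precedes it below -/
import Mathlib

section
/- The set 𝒢 of nondecreasing right-continuous functions g : [0,1) → [0,1], regarded as a subset of L²([0,1], dx) (identifying functions that agree Lebesgue-almost everywhere), is a compact subset of L²([0,1], dx) in the norm topology. -/
open Set MeasureTheory ENNReal Filter Topology

noncomputable section

instance : Fact ((1 : ℝ≥0∞) ≤ 2) := ⟨by norm_num⟩

/-- Lebesgue measure on `[0,1)`. -/
def leb01 : Measure ℝ := volume.restrict (Ico (0:ℝ) 1)

/-- The set `𝒢 ⊆ L²([0,1], dx)` of (classes of) nondecreasing right-continuous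
functions `g : [0,1) → [0,1]`. -/
def GG : Set (Lp ℝ 2 leb01) :=
  {f | ∃ g : ℝ → ℝ, MonotoneOn g (Ico (0:ℝ) 1) ∧
    (∀ t ∈ Ico (0:ℝ) 1, ContinuousWithinAt g (Ici t) t) ∧
    (∀ t ∈ Ico (0:ℝ) 1, g t ∈ Icc (0:ℝ) 1) ∧ ⇑f =ᵐ[leb01] g}

instance : IsProbabilityMeasure leb01 :=
  ⟨by rw [leb01, Measure.restrict_apply_univ, Real.volume_Ico]; norm_num⟩

lemma leb01_ae_mem : ∀ᵐ x ∂leb01, x ∈ Ico (0:ℝ) 1 :=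
  ae_restrict_mem measurableSet_Ico

lemma leb01_le_volume (s : Set ℝ) : leb01 s ≤ volume s :=
  Measure.le_iff'.1 Measure.restrict_le_self s

lemma indicator_Ici_sub {a b : ℝ} (hab : a ≤ b) (c x : ℝ) :
    (Ici a).indicator (fun _ => c) x - (Ici b).indicator (fun _ => c) x
      = (Ico a b).indicator (fun _ => c) x := by
  rcases le_or_gt b x with h2 | h2
  · rw [indicator_of_mem (mem_Ici.2 (hab.trans h2)), indicator_of_mem (mem_Ici.2 h2),
      indicator_of_notMem (fun h => absurd h2 (not_le.2 (mem_Ico.1 h).2))]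
    ring
  · rw [indicator_of_notMem (fun h => absurd (mem_Ici.1 h) (not_le.2 h2)), sub_zero]
    rcases le_or_gt a x with h1 | h1
    · rw [indicator_of_mem (mem_Ici.2 h1), indicator_of_mem (mem_Ico.2 ⟨h1, h2⟩)]
    · rw [indicator_of_notMem (fun h => absurd (mem_Ici.1 h) (not_le.2 h1)),
        indicator_of_notMem (fun h => absurd (mem_Ico.1 h).1 (not_le.2 h1))]

lemma card_filter_val_lt {n : ℕ} (m : ℕ) (hm : m ≤ n) :
    (Finset.univ.filter fun j : Fin n => (j : ℕ) < m).card = m := by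
  rw [← Finset.card_range m]
  apply Finset.card_bij (fun (j : Fin n) _ => (j : ℕ))
  · intro a ha
    simp only [Finset.mem_filter] at ha
    simpa using ha.2
  · intro a ha b hb hab
    exact Fin.val_injective hab
  · intro b hb
    simp only [Finset.mem_range] at hb
    exact ⟨⟨b, lt_of_lt_of_le hb hm⟩, by simp [hb], rfl⟩

lemma card_filter_val_lt_le {n : ℕ} (m : ℕ) :
    (Finset.univ.filter fun j : Fin n => (j : ℕ) < m).card ≤ m := by
  have : (Finset.univ.filter fun j : Fin n => (j : ℕ) < m).card ≤ (Finset.range m).card := by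
    exact Finset.card_le_card_of_injOn (fun j => (j : ℕ))
      (fun a ha => by simp at ha; simpa using ha)
      (fun a _ b _ hab => Fin.val_injective hab)
  simpa using this

/-- Measurability of the step functions. -/
lemma measurable_stepsum {n : ℕ} (t : Fin n → ℝ) :
    Measurable (fun x => ∑ j : Fin n, (Ici (t j)).indicator (fun _ => (n:ℝ)⁻¹) x) := by
  apply Finset.measurable_sum
  intro j _
  exact measurable_const.indicator measurableSet_Ici

lemma memℒp_stepsum {n : ℕ} (t : Fin n → ℝ) :
    MemLp (fun x => ∑ j : Fin n, (Ici (t j)).indicator (fun _ => (n:ℝ)⁻¹) x) 2 leb01 := by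
  exact memLp_finset_sum Finset.univ
    (fun j _ => memLp_indicator_const 2 measurableSet_Ici _ (Or.inr (measure_ne_top _ _)))

/-- The key approximation: any `g` as in `GG` is within `n⁻¹ + (n⁻¹)^(1/2)` in `L²`
of a step function with values and jump points on the grid `1/n`. -/
lemma approx_step (n : ℕ) (hn : 0 < n) (g : ℝ → ℝ)
    (hmono : MonotoneOn g (Ico (0:ℝ) 1))
    (hrc : ∀ t ∈ Ico (0:ℝ) 1, ContinuousWithinAt g (Ici t) t)
    (hbdd : ∀ t ∈ Ico (0:ℝ) 1, g t ∈ Icc (0:ℝ) 1)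
    (hgm : AEStronglyMeasurable g leb01) :
    ∃ σ : Fin n → Fin (n+1),
      eLpNorm (fun x => g x -
          ∑ j : Fin n, (Ici ((σ j : ℝ)/n)).indicator (fun _ => (n:ℝ)⁻¹) x) 2 leb01
        ≤ ENNReal.ofReal ((n:ℝ)⁻¹ + ((n:ℝ)⁻¹) ^ ((1:ℝ)/2)) := by
  have hn' : (0:ℝ) < n := by exact_mod_cast hn
  set X : Fin n → Set ℝ := fun j => insert 1 {x | x ∈ Ico (0:ℝ) 1 ∧ ((j:ℝ)+1)/n ≤ g x} with hX
  have hXne : ∀ j, (X j).Nonempty := fun j => insert_nonempty _ _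
  have hXbdd : ∀ j, BddBelow (X j) := by
    intro j
    refine ⟨0, fun y hy => ?_⟩
    rcases hy with rfl | hy
    · norm_num
    · exact hy.1.1
  set T : Fin n → ℝ := fun j => sInf (X j) with hT
  have hT0 : ∀ j, 0 ≤ T j := by
    intro j
    refine le_csInf (hXne j) fun y hy => ?_
    rcases hy with rfl | hy
    · norm_num
    · exact hy.1.1
  have hT1 : ∀ j, T j ≤ 1 := fun j => csInf_le (hXbdd j) (mem_insert 1 _)
  have P1 : ∀ j : Fin n, ∀ x ∈ Ico (0:ℝ) 1, ((j:ℝ)+1)/n ≤ g x → T j ≤ x :=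
    fun j x hx h => csInf_le (hXbdd j) (mem_insert_of_mem _ ⟨hx, h⟩)
  have P2 : ∀ j : Fin n, ∀ x' ∈ Ico (0:ℝ) 1, T j < x' → ((j:ℝ)+1)/n ≤ g x' := by
    intro j x' hx' hlt
    obtain ⟨y, hy, hyx⟩ := exists_lt_of_csInf_lt (hXne j) hlt
    rcases hy with rfl | hy
    · exact absurd (hyx.trans hx'.2) (lt_irrefl 1)
    · exact hy.2.trans (hmono hy.1 hx' hyx.le)
  set S : ℝ → ℝ := fun x => ∑ j : Fin n, (Ici (T j)).indicator (fun _ => (n:ℝ)⁻¹) x with hS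
  have hScard : ∀ x, S x =
      ((Finset.univ.filter fun j : Fin n => T j ≤ x).card : ℝ) * (n:ℝ)⁻¹ := by
    intro x
    rw [hS]
    simp only [indicator_apply, mem_Ici]
    rw [← Finset.sum_filter, Finset.sum_const, nsmul_eq_mul]
  have hlow : ∀ x ∈ Ico (0:ℝ) 1, g x - (n:ℝ)⁻¹ ≤ S x := by
    intro x hx
    obtain ⟨hg0, hg1⟩ := hbdd x hx
    have hmn : ⌊(n:ℝ) * g x⌋₊ ≤ n := by
      have h1 : (n:ℝ) * g x ≤ (n:ℝ) := by nlinarith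
      calc ⌊(n:ℝ) * g x⌋₊ ≤ ⌊(n:ℝ)⌋₊ := Nat.floor_mono h1
        _ = n := Nat.floor_natCast n
    have hsub : (Finset.univ.filter fun j : Fin n => (j:ℕ) < ⌊(n:ℝ) * g x⌋₊)
        ⊆ Finset.univ.filter fun j : Fin n => T j ≤ x := by
      intro j hj
      simp only [Finset.mem_filter, Finset.mem_univ, true_and] at hj ⊢
      apply P1 j x hx
      rw [div_le_iff₀ hn']
      have h1 : ((j:ℕ) + 1 : ℝ) ≤ (⌊(n:ℝ) * g x⌋₊ : ℝ) := by exact_mod_cast hj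
      have h2 : ((⌊(n:ℝ) * g x⌋₊ : ℝ)) ≤ (n:ℝ) * g x := Nat.floor_le (by positivity)
      push_cast at h1
      nlinarith
    have hcard : ⌊(n:ℝ) * g x⌋₊ ≤ (Finset.univ.filter fun j : Fin n => T j ≤ x).card := by
      rw [← card_filter_val_lt (n := n) _ hmn]
      exact Finset.card_le_card hsub
    rw [hScard x]
    have h3 : (n:ℝ) * g x - 1 < (⌊(n:ℝ) * g x⌋₊ : ℝ) := Nat.sub_one_lt_floor _
    have h4 : ((⌊(n:ℝ) * g x⌋₊ : ℝ))
        ≤ ((Finset.univ.filter fun j : Fin n => T j ≤ x).card : ℝ) := by exact_mod_cast hcard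
    have h5 : (0:ℝ) < (n:ℝ)⁻¹ := by positivity
    have h6 : ((n:ℝ))⁻¹ * (n:ℝ) = 1 := inv_mul_cancel₀ (ne_of_gt hn')
    nlinarith [mul_le_mul_of_nonneg_right (h3.le.trans h4) h5.le]
  have hup : ∀ x ∈ Ico (0:ℝ) 1, S x ≤ g x := by
    intro x hx
    have key : ∀ x' ∈ Ioo x 1, S x ≤ g x' := by
      intro x' hx'
      have hx'mem : x' ∈ Ico (0:ℝ) 1 := ⟨hx.1.trans hx'.1.le, hx'.2⟩
      have hg0' : 0 ≤ g x' := (hbdd x' hx'mem).1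
      have hsub : (Finset.univ.filter fun j : Fin n => T j ≤ x)
          ⊆ Finset.univ.filter fun j : Fin n => (j:ℕ) < ⌊(n:ℝ) * g x'⌋₊ := by
        intro j hj
        simp only [Finset.mem_filter, Finset.mem_univ, true_and] at hj ⊢
        have hP := P2 j x' hx'mem (lt_of_le_of_lt hj hx'.1)
        rw [div_le_iff₀ hn'] at hP
        have hle : ((j:ℕ) + 1 : ℕ) ≤ ⌊(n:ℝ) * g x'⌋₊ := Nat.le_floor (by push_cast; nlinarith)
        omega
      have hcard := (Finset.card_le_card hsub).trans (card_filter_val_lt_le _)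
      rw [hScard x]
      have h2 : ((⌊(n:ℝ) * g x'⌋₊ : ℝ)) ≤ (n:ℝ) * g x' := Nat.floor_le (by positivity)
      have h4 : ((Finset.univ.filter fun j : Fin n => T j ≤ x).card : ℝ)
          ≤ (⌊(n:ℝ) * g x'⌋₊ : ℝ) := by exact_mod_cast hcard
      have h5 : (0:ℝ) < (n:ℝ)⁻¹ := by positivity
      have h6 : ((n:ℝ))⁻¹ * (n:ℝ) = 1 := inv_mul_cancel₀ (ne_of_gt hn')
      nlinarith [mul_le_mul_of_nonneg_right (h4.trans h2) h5.le]
    have hc : ContinuousWithinAt g (Ioi x) x := (hrc x hx).mono Ioi_subset_Ici_self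
    refine ge_of_tendsto hc ?_
    filter_upwards [Ioo_mem_nhdsGT hx.2] with x' hx' using key x' hx'
  refine ⟨fun j => ⟨⌈(n:ℝ) * T j⌉₊, by
    rw [Nat.lt_succ_iff, Nat.ceil_le]
    push_cast
    nlinarith [hT1 j]⟩, ?_⟩
  set σ : Fin n → ℝ := fun j => (⌈(n:ℝ) * T j⌉₊ : ℝ) / n with hσ
  have hgoalfun : (fun x => g x -
      ∑ j : Fin n, (Ici (((⟨⌈(n:ℝ) * T j⌉₊, by
        rw [Nat.lt_succ_iff, Nat.ceil_le]; push_cast; nlinarith [hT1 j]⟩ : Fin (n+1)) : ℝ)/n)).indicator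
          (fun _ => (n:ℝ)⁻¹) x)
      = fun x => g x - ∑ j : Fin n, (Ici (σ j)).indicator (fun _ => (n:ℝ)⁻¹) x := rfl
  rw [hgoalfun]
  set step : ℝ → ℝ := fun x => ∑ j : Fin n, (Ici (σ j)).indicator (fun _ => (n:ℝ)⁻¹) x with hstep
  have hTσ : ∀ j, T j ≤ σ j := by
    intro j
    rw [hσ, le_div_iff₀ hn']
    calc T j * n = (n:ℝ) * T j := mul_comm _ _
      _ ≤ (⌈(n:ℝ) * T j⌉₊ : ℝ) := Nat.le_ceil _
  have hσT : ∀ j, σ j - T j ≤ (n:ℝ)⁻¹ := by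
    intro j
    have hce : (⌈(n:ℝ) * T j⌉₊ : ℝ) < (n:ℝ) * T j + 1 :=
      Nat.ceil_lt_add_one (mul_nonneg hn'.le (hT0 j))
    have h6 : ((n:ℝ))⁻¹ * (n:ℝ) = 1 := inv_mul_cancel₀ (ne_of_gt hn')
    rw [hσ, sub_le_iff_le_add, div_le_iff₀ hn']
    nlinarith
  have hmeasS : Measurable S := measurable_stepsum T
  have hmeasStep : Measurable step := measurable_stepsum σ
  have hbound1 : eLpNorm (fun x => g x - S x) 2 leb01 ≤ ENNReal.ofReal ((n:ℝ)⁻¹) := by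
    have hb := eLpNorm_le_of_ae_bound (f := fun x => g x - S x) (μ := leb01) (p := 2)
      (C := (n:ℝ)⁻¹) ?_
    · simpa [measure_univ] using hb
    · filter_upwards [leb01_ae_mem] with x hx
      rw [Real.norm_eq_abs, abs_le]
      constructor
      · have := hup x hx
        have h5 : (0:ℝ) ≤ (n:ℝ)⁻¹ := by positivity
        linarith
      · linarith [hlow x hx]
  have hdiff : (fun x => S x - step x)
      = fun x => ∑ j : Fin n, (Ico (T j) (σ j)).indicator (fun _ => (n:ℝ)⁻¹) x := by
    funext x
    rw [hS, hstep, ← Finset.sum_sub_distrib]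
    exact Finset.sum_congr rfl fun j _ => indicator_Ici_sub (hTσ j) _ x
  have hbound2 : eLpNorm (fun x => S x - step x) 2 leb01
      ≤ ENNReal.ofReal (((n:ℝ)⁻¹) ^ ((1:ℝ)/2)) := by
    rw [hdiff]
    have hfun : (fun x => ∑ j : Fin n, (Ico (T j) (σ j)).indicator (fun _ => (n:ℝ)⁻¹) x)
        = ∑ j : Fin n, (fun x => (Ico (T j) (σ j)).indicator (fun _ => (n:ℝ)⁻¹) x) := by
      funext x
      rw [Finset.sum_apply]
    rw [hfun]
    have hterm : ∀ j ∈ Finset.univ, eLpNorm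
        (fun x => (Ico (T j) (σ j)).indicator (fun _ => (n:ℝ)⁻¹) x) 2 leb01
        ≤ ENNReal.ofReal ((n:ℝ)⁻¹) * ENNReal.ofReal ((n:ℝ)⁻¹) ^ ((1:ℝ)/2) := by
      intro j _
      have heq : (fun x => (Ico (T j) (σ j)).indicator (fun _ => (n:ℝ)⁻¹) x)
          = (Ico (T j) (σ j)).indicator (fun _ => (n:ℝ)⁻¹) := rfl
      rw [heq, eLpNorm_indicator_const measurableSet_Ico two_ne_zero ENNReal.ofNat_ne_top]
      have hμ : leb01 (Ico (T j) (σ j)) ≤ ENNReal.ofReal ((n:ℝ)⁻¹) := by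
        refine (leb01_le_volume _).trans ?_
        rw [Real.volume_Ico]
        exact ENNReal.ofReal_le_ofReal (by linarith [hσT j])
      have hnorm : ‖(n:ℝ)⁻¹‖ₑ = ENNReal.ofReal ((n:ℝ)⁻¹) :=
        Real.enorm_eq_ofReal (by positivity)
      rw [hnorm]
      have hexp : (1 / (2:ℝ≥0∞).toReal) = ((1:ℝ)/2) := by norm_num
      rw [hexp]
      exact mul_le_mul_right (ENNReal.rpow_le_rpow hμ (by norm_num)) _
    calc eLpNorm (∑ j : Fin n, fun x => (Ico (T j) (σ j)).indicator (fun _ => (n:ℝ)⁻¹) x) 2 leb01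
        ≤ ∑ j : Fin n, eLpNorm
            (fun x => (Ico (T j) (σ j)).indicator (fun _ => (n:ℝ)⁻¹) x) 2 leb01 :=
          eLpNorm_sum_le (fun j _ =>
            (measurable_const.indicator measurableSet_Ico).aestronglyMeasurable) (by norm_num)
      _ ≤ ∑ _j : Fin n, ENNReal.ofReal ((n:ℝ)⁻¹) * ENNReal.ofReal ((n:ℝ)⁻¹) ^ ((1:ℝ)/2) :=
          Finset.sum_le_sum hterm
      _ = ENNReal.ofReal (((n:ℝ)⁻¹) ^ ((1:ℝ)/2)) := by
          rw [Finset.sum_const, Finset.card_univ, Fintype.card_fin, nsmul_eq_mul]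
          rw [ENNReal.ofReal_rpow_of_nonneg (by positivity) (by norm_num)]
          rw [show ((n:ℕ) : ℝ≥0∞) = ENNReal.ofReal ((n:ℕ) : ℝ) from (ENNReal.ofReal_natCast n).symm]
          rw [← ENNReal.ofReal_mul (by positivity), ← ENNReal.ofReal_mul (by positivity)]
          congr 1
          rw [← mul_assoc, mul_inv_cancel₀ (ne_of_gt hn'), one_mul]
  have hdecomp : (fun x => g x - step x) = (fun x => g x - S x) + (fun x => S x - step x) := by
    funext x
    simp only [Pi.add_apply]
    ring
  calc eLpNorm (fun x => g x - step x) 2 leb01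
      ≤ eLpNorm (fun x => g x - S x) 2 leb01 + eLpNorm (fun x => S x - step x) 2 leb01 := by
        rw [hdecomp]
        exact eLpNorm_add_le (hgm.sub hmeasS.aestronglyMeasurable)
          (hmeasS.aestronglyMeasurable.sub hmeasStep.aestronglyMeasurable) (by norm_num)
    _ ≤ ENNReal.ofReal ((n:ℝ)⁻¹) + ENNReal.ofReal (((n:ℝ)⁻¹) ^ ((1:ℝ)/2)) :=
        add_le_add hbound1 hbound2
    _ = ENNReal.ofReal ((n:ℝ)⁻¹ + ((n:ℝ)⁻¹) ^ ((1:ℝ)/2)) :=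
        (ENNReal.ofReal_add (by positivity) (by positivity)).symm

lemma GG_totallyBounded : TotallyBounded GG := by
  rw [Metric.totallyBounded_iff]
  intro ε hε
  obtain ⟨n, hnn⟩ := exists_nat_gt (max 1 (4 / ε^2))
  have hn1 : (1:ℝ) < n := lt_of_le_of_lt (le_max_left _ _) hnn
  have hn4 : 4 / ε^2 < n := lt_of_le_of_lt (le_max_right _ _) hnn
  have hn : 0 < n := by exact_mod_cast lt_trans one_pos hn1
  have hn' : (0:ℝ) < n := by exact_mod_cast hn
  refine ⟨(fun σ : Fin n → Fin (n+1) =>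
      (memℒp_stepsum (fun j => ((σ j : ℝ))/n)).toLp _) '' Set.univ,
    Set.Finite.image _ Set.finite_univ, ?_⟩
  intro f hf
  obtain ⟨g, hmono, hrc, hbdd, hae⟩ := hf
  have hgm : AEStronglyMeasurable g leb01 := (Lp.aestronglyMeasurable f).congr hae
  obtain ⟨σ, hσ⟩ := approx_step n hn g hmono hrc hbdd hgm
  simp only [Set.mem_iUnion, Metric.mem_ball, exists_prop]
  refine ⟨(memℒp_stepsum (fun j => ((σ j : ℝ))/n)).toLp _,
    ⟨σ, Set.mem_univ _, rfl⟩, ?_⟩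
  rw [dist_eq_norm, Lp.norm_def]
  have hcoe : ⇑(f - (memℒp_stepsum (fun j => ((σ j : ℝ))/n)).toLp _) =ᵐ[leb01]
      fun x => g x - ∑ j : Fin n, (Ici ((σ j : ℝ)/n)).indicator (fun _ => (n:ℝ)⁻¹) x := by
    filter_upwards [Lp.coeFn_sub f ((memℒp_stepsum (fun j => ((σ j : ℝ))/n)).toLp _), hae,
      MemLp.coeFn_toLp (memℒp_stepsum (fun j => ((σ j : ℝ))/n))] with x h1 h2 h3
    rw [h1, Pi.sub_apply, h2, h3]
  rw [eLpNorm_congr_ae hcoe]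
  have h2 : (eLpNorm (fun x => g x -
        ∑ j : Fin n, (Ici ((σ j : ℝ)/n)).indicator (fun _ => (n:ℝ)⁻¹) x) 2 leb01).toReal
      ≤ (n:ℝ)⁻¹ + ((n:ℝ)⁻¹) ^ ((1:ℝ)/2) :=
    ENNReal.toReal_le_of_le_ofReal (by positivity) hσ
  refine lt_of_le_of_lt h2 ?_
  have hinv1 : (n:ℝ)⁻¹ ≤ 1 := by
    rw [inv_le_one_iff₀]
    right
    exact hn1.le
  have hr1 : (n:ℝ)⁻¹ ≤ ((n:ℝ)⁻¹) ^ ((1:ℝ)/2) := by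
    calc (n:ℝ)⁻¹ = ((n:ℝ)⁻¹) ^ (1:ℝ) := (Real.rpow_one _).symm
      _ ≤ ((n:ℝ)⁻¹) ^ ((1:ℝ)/2) :=
        Real.rpow_le_rpow_of_exponent_ge (by positivity) hinv1 (by norm_num)
  have hsq : ((n:ℝ)⁻¹) ^ ((1:ℝ)/2) < ε/2 := by
    rw [show ((n:ℝ)⁻¹) ^ ((1:ℝ)/2) = Real.sqrt ((n:ℝ)⁻¹) from (Real.sqrt_eq_rpow _).symm]
    rw [Real.sqrt_lt' (half_pos hε)]
    have hε2 : (0:ℝ) < ε^2 := by positivity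
    have h8 : 4 < (n:ℝ) * ε^2 := (div_lt_iff₀ hε2).1 hn4
    have hinv : (0:ℝ) < (n:ℝ)⁻¹ := by positivity
    have h7 : (n:ℝ)⁻¹ * ((n:ℝ) * ε^2) = ε^2 := by field_simp
    have h9 := mul_lt_mul_of_pos_left h8 hinv
    rw [h7] at h9
    nlinarith
  linarith

instance : NullSingletonClass leb01 := by unfold leb01; infer_instance

set_option synthInstance.maxHeartbeats 1000000 in
lemma GG_isClosed : IsClosed GG := by
  refine isClosed_of_closure_subset fun f hf => ?_
  obtain ⟨u, hu_mem, hu_tendsto⟩ := mem_closure_iff_seq_limit.1 hf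
  simp only [GG, Set.mem_setOf_eq] at hu_mem
  choose h hmono hrc hbdd hae using hu_mem
  have h1 : Tendsto (fun k => eLpNorm (⇑(u k) - ⇑f) 2 leb01) atTop (𝓝 0) :=
    (Lp.tendsto_Lp_iff_tendsto_eLpNorm' u f).1 hu_tendsto
  have h2 : TendstoInMeasure leb01 (fun k => ⇑(u k)) atTop ⇑f :=
    tendstoInMeasure_of_tendsto_eLpNorm (by norm_num)
      (fun k => Lp.aestronglyMeasurable _) (Lp.aestronglyMeasurable f) h1
  obtain ⟨ns, -, hns⟩ := h2.exists_seq_tendsto_ae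
  have hP : ∀ᵐ x ∂leb01,
      x ∈ Ico (0:ℝ) 1 ∧ Tendsto (fun k => h (ns k) x) atTop (𝓝 (⇑f x)) := by
    have hae' : ∀ᵐ x ∂leb01, ∀ k, ⇑(u (ns k)) x = h (ns k) x :=
      ae_all_iff.2 fun k => hae (ns k)
    filter_upwards [leb01_ae_mem, hns, hae'] with x hx htend heq
    exact ⟨hx, htend.congr fun k => heq k⟩
  set S : Set ℝ :=
    {x | x ∈ Ico (0:ℝ) 1 ∧ Tendsto (fun k => h (ns k) x) atTop (𝓝 (⇑f x))} with hSdef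
  have hS_ae : ∀ᵐ x ∂leb01, x ∈ S := hP
  have hSc : leb01 Sᶜ = 0 := by
    have := ae_iff.1 hS_ae
    simpa [Set.compl_def] using this
  have hSsub : S ⊆ Ico (0:ℝ) 1 := fun x hx => hx.1
  have hfmono : ∀ x ∈ S, ∀ y ∈ S, x ≤ y → ⇑f x ≤ ⇑f y := by
    intro x hx y hy hxy
    exact le_of_tendsto_of_tendsto' hx.2 hy.2 fun k => hmono (ns k) hx.1 hy.1 hxy
  have hfbdd : ∀ x ∈ S, ⇑f x ∈ Icc (0:ℝ) 1 := by
    intro x hx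
    exact isClosed_Icc.mem_of_tendsto hx.2
      (Filter.Eventually.of_forall fun k => hbdd (ns k) x hx.1)
  have hSne : ∀ t : ℝ, t < 1 → (S ∩ Ioi t).Nonempty := by
    intro t ht
    by_contra hcon
    rw [Set.not_nonempty_iff_eq_empty] at hcon
    have hsub2 : Ioo (max t 0) 1 ⊆ Sᶜ := by
      intro y hy hyS
      have : y ∈ S ∩ Ioi t := ⟨hyS, lt_of_le_of_lt (le_max_left t 0) hy.1⟩
      rw [hcon] at this
      exact this
    have hμ : leb01 (Ioo (max t 0) 1) = 0 := measure_mono_null hsub2 hSc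
    have hval : leb01 (Ioo (max t 0) 1) = ENNReal.ofReal (1 - max t 0) := by
      rw [leb01, Measure.restrict_apply measurableSet_Ioo]
      rw [show Ioo (max t 0) 1 ∩ Ico (0:ℝ) 1 = Ioo (max t 0) 1 from
        inter_eq_left.2 fun y hy =>
          ⟨le_of_lt (lt_of_le_of_lt (le_max_right t 0) hy.1), hy.2⟩]
      exact Real.volume_Ioo
    rw [hval] at hμ
    have hlt : max t 0 < 1 := max_lt ht one_pos
    rw [ENNReal.ofReal_eq_zero] at hμ
    linarith
  set G : ℝ → ℝ := fun t => sInf (⇑f '' (S ∩ Ioi t)) with hGdef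
  have himg_bddBelow : ∀ t : ℝ, BddBelow (⇑f '' (S ∩ Ioi t)) := by
    intro t
    refine ⟨0, fun y hy => ?_⟩
    obtain ⟨s', hs', rfl⟩ := hy
    exact (hfbdd s' hs'.1).1
  have himg_ne : ∀ t : ℝ, t < 1 → (⇑f '' (S ∩ Ioi t)).Nonempty :=
    fun t ht => (hSne t ht).image _
  have hGmono : ∀ a b : ℝ, a ≤ b → b < 1 → G a ≤ G b := by
    intro a b hab hb
    exact csInf_le_csInf (himg_bddBelow a) (himg_ne b hb)
      (image_mono (inter_subset_inter_right _ (Ioi_subset_Ioi hab)))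
  have hGf : ∀ x ∈ S, ⇑f x ≤ G x := by
    intro x hx
    refine le_csInf (himg_ne x hx.1.2) ?_
    rintro y ⟨s', hs', rfl⟩
    exact hfmono x hx s' hs'.1 (le_of_lt hs'.2)
  have hGle : ∀ t : ℝ, ∀ x ∈ S, t < x → G t ≤ ⇑f x := by
    intro t x hx htx
    exact csInf_le (himg_bddBelow t) ⟨x, ⟨hx, htx⟩, rfl⟩
  have hGbdd : ∀ t ∈ Ico (0:ℝ) 1, G t ∈ Icc (0:ℝ) 1 := by
    intro t ht
    constructor
    · refine le_csInf (himg_ne t ht.2) ?_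
      rintro y ⟨s', hs', rfl⟩
      exact (hfbdd s' hs'.1).1
    · obtain ⟨s', hs'⟩ := hSne t ht.2
      exact (hGle t s' hs'.1 hs'.2).trans (hfbdd s' hs'.1).2
  have hGmonoOn : MonotoneOn G (Ico (0:ℝ) 1) := fun a _ b hb hab => hGmono a b hab hb.2
  have hGrc : ∀ t ∈ Ico (0:ℝ) 1, ContinuousWithinAt G (Ici t) t := by
    intro t ht
    rw [Metric.continuousWithinAt_iff]
    intro ε hε
    have hlt : G t < G t + ε := by linarith
    obtain ⟨y, hy, hyl⟩ := exists_lt_of_csInf_lt (himg_ne t ht.2) hlt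
    obtain ⟨s', hs', rfl⟩ := hy
    have hts' : t < s' := hs'.2
    refine ⟨s' - t, by linarith, ?_⟩
    intro x hx hdist
    rw [Real.dist_eq] at hdist
    have hxt : t ≤ x := hx
    have hxs : x < s' := by
      rw [abs_sub_lt_iff] at hdist
      linarith [hdist.1]
    have hx1 : x < 1 := lt_of_lt_of_le hxs (hSsub hs'.1).2.le
    have hup : G x ≤ ⇑f s' := hGle x s' hs'.1 hxs
    have hlow : G t ≤ G x := hGmono t x hxt hx1
    rw [Real.dist_eq, abs_sub_lt_iff]
    exact ⟨by linarith, by linarith⟩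
  set B : Set ℝ := {x | x ∈ S ∧ ⇑f x < G x} with hBdef
  have hBcount : B.Countable := by
    apply Set.PairwiseDisjoint.countable_of_isOpen
      (s := fun x => Ioo (⇑f x) (G x)) (a := B)
    · intro a ha b hb hab
      rcases lt_or_gt_of_ne hab with hlt | hlt
      · refine Set.disjoint_left.2 fun z hz1 hz2 => ?_
        have h1 : G a ≤ ⇑f b := hGle a b hb.1 hlt
        have := hz1.2
        have := hz2.1
        simp only [Function.onFun] at *
        linarith [hz1.2, hz2.1]
      · refine Set.disjoint_left.2 fun z hz1 hz2 => ?_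
        have h1 : G b ≤ ⇑f a := hGle b a ha.1 hlt
        linarith [hz1.1, hz2.2]
    · intro x _
      exact isOpen_Ioo
    · intro x hx
      exact nonempty_Ioo.2 hx.2
  have hBnull : leb01 B = 0 := hBcount.measure_zero _
  have haeG : ⇑f =ᵐ[leb01] G := by
    rw [EventuallyEq, ae_iff]
    refine measure_mono_null (fun x hx => ?_) (measure_union_null hSc hBnull)
    by_cases hxS : x ∈ S
    · exact Or.inr ⟨hxS, lt_of_le_of_ne (hGf x hxS) hx⟩
    · exact Or.inl hxS
  exact ⟨G, hGmonoOn, hGrc, hGbdd, haeG⟩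

/-- `𝒢` is a compact subset of `L²([0,1], dx)` in the norm topology. -/
theorem GG_isCompact : IsCompact GG :=
  TotallyBounded.isCompact_of_isClosed GG_totallyBounded GG_isClosed
end
end

section
/- Let β > 0, N ≥ 2 an integer, and let f : [0,1] → ℝ be three times continuously differentiable with f'(0) = f'(1) = 0. For x with 0 < x¹ < x² < ⋯ < x^{N−1} < 1 (and x⁰ = 0, x^N = 1), set G(x) := N·[ (β/N − 1)·(1/(N−1)) ∑_{i=1}^{N−1} ( 1/(x^i − x^{i−1}) − 1/(x^{i+1} − x^i) ) f'(x^i) + (1/(N−1)) ∑_{i=1}^{N−1} f''(x^i) ]. Then |G(x)| ≤ ‖f''‖_∞ · N(β+1)/(N−1) + ‖f'''‖_∞ · N/(N−1), uniformly in x. -/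
open Set Finset

/-- Uniform bound on `G(x) = N·L^N F^N(x)` for the interacting Bessel particle system:
if `f` is three times differentiable on `[0,1]` with `f'(0) = f'(1) = 0`, and
`C2`, `C3` bound `|f''|`, `|f'''|` on `[0,1]`, then for every strictly increasing
configuration `0 < x¹ < ⋯ < x^{N-1} < 1` (with `x⁰ = 0`, `x^N = 1`),
`|G(x)| ≤ C2·N(β+1)/(N-1) + C3·N/(N-1)`. -/
theorem bessel_generator_bound (β : ℝ) (hβ : 0 < β) (N : ℕ) (hN : 2 ≤ N)
    (f f' f'' f''' : ℝ → ℝ)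
    (hf1 : ∀ t ∈ Icc (0:ℝ) 1, HasDerivWithinAt f (f' t) (Icc (0:ℝ) 1) t)
    (hf2 : ∀ t ∈ Icc (0:ℝ) 1, HasDerivWithinAt f' (f'' t) (Icc (0:ℝ) 1) t)
    (hf3 : ∀ t ∈ Icc (0:ℝ) 1, HasDerivWithinAt f'' (f''' t) (Icc (0:ℝ) 1) t)
    (hf3c : ContinuousOn f''' (Icc (0:ℝ) 1))
    (hb0 : f' 0 = 0) (hb1 : f' 1 = 0)
    (C2 C3 : ℝ)
    (hC2 : ∀ t ∈ Icc (0:ℝ) 1, |f'' t| ≤ C2)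
    (hC3 : ∀ t ∈ Icc (0:ℝ) 1, |f''' t| ≤ C3)
    (x : ℕ → ℝ) (hx0 : x 0 = 0) (hxN : x N = 1)
    (hmono : ∀ i < N, x i < x (i + 1)) :
    |(N : ℝ) * ((β / N - 1) * (1 / ((N : ℝ) - 1)) *
        (∑ i ∈ Finset.Icc 1 (N - 1), (1 / (x i - x (i - 1)) - 1 / (x (i + 1) - x i)) * f' (x i))
      + (1 / ((N : ℝ) - 1)) * ∑ i ∈ Finset.Icc 1 (N - 1), f'' (x i))|
      ≤ C2 * ((N : ℝ) * (β + 1) / ((N : ℝ) - 1)) + C3 * ((N : ℝ) / ((N : ℝ) - 1)) := by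
  obtain ⟨n, rfl⟩ : ∃ n, N = n + 1 := ⟨N - 1, by omega⟩
  have hn : 1 ≤ n := by omega
  have hnn : (0:ℝ) < (n:ℝ) := by exact_mod_cast hn
  have hc : (0:ℝ) < (n:ℝ) + 1 := by linarith
  -- monotonicity
  have hle : ∀ j, j ≤ n + 1 → ∀ i, i ≤ j → x i ≤ x j := by
    intro j
    induction j with
    | zero => intro _ i hi; simp [Nat.le_zero.mp hi]
    | succ k ih =>
      intro hk i hi
      rcases eq_or_lt_of_le hi with h | h
      · rw [h]
      · exact le_trans (ih (by omega) i (by omega)) (hmono k (by omega)).le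
  have hx01 : ∀ i, i ≤ n + 1 → x i ∈ Icc (0:ℝ) 1 := by
    intro i hi
    constructor
    · have := hle i hi 0 (Nat.zero_le _); rw [hx0] at this; exact this
    · have := hle (n+1) le_rfl i hi; rw [hxN] at this; exact this
  have hCf' : ContinuousOn f' (Icc (0:ℝ) 1) := fun t ht => (hf2 t ht).continuousWithinAt
  -- mean value theorem on each subinterval
  have key : ∀ i, i < n + 1 → ∃ c ∈ Ioo (x i) (x (i+1)),
      f'' c = (f' (x (i+1)) - f' (x i)) / (x (i+1) - x i) := by
    intro i hi
    apply exists_hasDerivAt_eq_slope f' f'' (hmono i hi)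
    · exact hCf'.mono (Icc_subset_Icc (hx01 i (by omega)).1 (hx01 (i+1) (by omega)).2)
    · intro t ht
      have ht01 : t ∈ Ioo (0:ℝ) 1 :=
        ⟨lt_of_le_of_lt (hx01 i (by omega)).1 ht.1,
         lt_of_lt_of_le ht.2 (hx01 (i+1) (by omega)).2⟩
      exact (hf2 t (Ioo_subset_Icc_self ht01)).hasDerivAt
        (Icc_mem_nhds ht01.1 ht01.2)
  have key' : ∀ i : ℕ, ∃ c : ℝ, i < n + 1 →
      c ∈ Ioo (x i) (x (i+1)) ∧ f'' c = (f' (x (i+1)) - f' (x i)) / (x (i+1) - x i) := by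
    intro i
    by_cases h : i < n + 1
    · obtain ⟨c, hc1, hc2⟩ := key i h
      exact ⟨c, fun _ => ⟨hc1, hc2⟩⟩
    · exact ⟨0, fun h' => absurd h' h⟩
  choose ξ hξ using key'
  have hξI : ∀ i, i < n + 1 → ξ i ∈ Icc (0:ℝ) 1 := by
    intro i hi
    obtain ⟨hm, _⟩ := hξ i hi
    exact ⟨le_trans (hx01 i (by omega)).1 hm.1.le,
           le_trans hm.2.le (hx01 (i+1) (by omega)).2⟩
  -- sum identity for S₁
  have hS1 : ∑ i ∈ Finset.Icc 1 (n + 1 - 1),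
        (1 / (x i - x (i - 1)) - 1 / (x (i + 1) - x i)) * f' (x i)
      = ∑ i ∈ Finset.range (n+1), f'' (ξ i) := by
    have hR : ∑ i ∈ Finset.range (n+1), f'' (ξ i)
        = ∑ i ∈ Finset.range (n+1), (f' (x (i+1)) - f' (x i)) / (x (i+1) - x i) :=
      Finset.sum_congr rfl fun i hi => (hξ i (Finset.mem_range.mp hi)).2
    have hsplit : ∑ i ∈ Finset.range (n+1), (f' (x (i+1)) - f' (x i)) / (x (i+1) - x i)
        = (∑ i ∈ Finset.range (n+1), f' (x (i+1)) * (1 / (x (i+1) - x i)))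
          - ∑ i ∈ Finset.range (n+1), f' (x i) * (1 / (x (i+1) - x i)) := by
      rw [← Finset.sum_sub_distrib]
      exact Finset.sum_congr rfl fun i _ => by ring
    have h1 : ∑ i ∈ Finset.range (n+1), f' (x (i+1)) * (1 / (x (i+1) - x i))
        = ∑ i ∈ Finset.range n, f' (x (i+1)) * (1 / (x (i+1) - x i)) := by
      rw [Finset.sum_range_succ, hxN, hb1]; ring
    have h2 : ∑ i ∈ Finset.range (n+1), f' (x i) * (1 / (x (i+1) - x i))
        = ∑ i ∈ Finset.range n, f' (x (i+1)) * (1 / (x (i+2) - x (i+1))) := by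
      rw [Finset.sum_range_succ', hx0, hb0]
      norm_num
    rw [hR, hsplit, h1, h2, ← Finset.sum_sub_distrib,
      show n + 1 - 1 = n from rfl, show Finset.Icc 1 n = Finset.Ico 1 (n+1) from
        (by ext; simp), Finset.sum_Ico_eq_sum_range]
    refine Finset.sum_congr (by norm_num) fun i _ => ?_
    have e1 : 1 + i - 1 = i := by omega
    have e3 : 1 + i + 1 = i + 2 := by omega
    have e2 : 1 + i = i + 1 := by omega
    rw [e1, e3, e2]
    ring
  -- sum identity for S₂
  have hS2 : ∑ i ∈ Finset.Icc 1 (n + 1 - 1), f'' (x i)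
      = ∑ i ∈ Finset.range n, f'' (x (i+1)) := by
    rw [show n + 1 - 1 = n from rfl, show Finset.Icc 1 n = Finset.Ico 1 (n+1) from
        (by ext; simp), Finset.sum_Ico_eq_sum_range]
    refine Finset.sum_congr (by norm_num) fun i _ => ?_
    rw [show 1 + i = i + 1 from by omega]
  rw [hS1, hS2]
  set A := ∑ i ∈ Finset.range (n+1), f'' (ξ i) with hA
  set B := ∑ i ∈ Finset.range n, f'' (x (i+1)) with hB
  set D := ∑ i ∈ Finset.range n, (f'' (ξ i) - f'' (x (i+1))) with hD
  have hABD : A - B = f'' (ξ n) + D := by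
    rw [hA, hB, hD, Finset.sum_sub_distrib, Finset.sum_range_succ]
    ring
  have hC2nn : (0:ℝ) ≤ C2 := le_trans (abs_nonneg _) (hC2 0 (by norm_num))
  have hC3nn : (0:ℝ) ≤ C3 := le_trans (abs_nonneg _) (hC3 0 (by norm_num))
  -- Lipschitz bound for f''
  have hLip : ∀ a ∈ Icc (0:ℝ) 1, ∀ b ∈ Icc (0:ℝ) 1, |f'' b - f'' a| ≤ C3 * |b - a| := by
    intro a ha b hb
    have := (convex_Icc (0:ℝ) 1).norm_image_sub_le_of_norm_hasDerivWithin_le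
      (fun t ht => hf3 t ht)
      (fun t ht => by rw [Real.norm_eq_abs]; exact hC3 t ht) ha hb
    simpa [Real.norm_eq_abs] using this
  -- bound on A
  have hAbd : |A| ≤ ((n:ℝ) + 1) * C2 := by
    calc |A| ≤ ∑ i ∈ Finset.range (n+1), |f'' (ξ i)| := Finset.abs_sum_le_sum_abs _ _
      _ ≤ ∑ _i ∈ Finset.range (n+1), C2 :=
          Finset.sum_le_sum fun i hi => hC2 _ (hξI i (Finset.mem_range.mp hi))
      _ = ((n:ℝ) + 1) * C2 := by
          rw [Finset.sum_const, Finset.card_range]; push_cast; ring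
  -- bound on D
  have hDbd : |D| ≤ C3 := by
    have step : ∀ i ∈ Finset.range n, |f'' (ξ i) - f'' (x (i+1))| ≤ C3 * (x (i+1) - x i) := by
      intro i hi
      have hi' : i < n + 1 := by have := Finset.mem_range.mp hi; omega
      obtain ⟨hm, _⟩ := hξ i hi'
      calc |f'' (ξ i) - f'' (x (i+1))| ≤ C3 * |ξ i - x (i+1)| :=
            hLip _ (hx01 (i+1) (by omega)) _ (hξI i hi')
        _ ≤ C3 * (x (i+1) - x i) := by
            apply mul_le_mul_of_nonneg_left _ hC3nn
            rw [abs_sub_comm, abs_of_nonneg (by linarith [hm.2])]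
            linarith [hm.1]
    calc |D| ≤ ∑ i ∈ Finset.range n, |f'' (ξ i) - f'' (x (i+1))| :=
          Finset.abs_sum_le_sum_abs _ _
      _ ≤ ∑ i ∈ Finset.range n, C3 * (x (i+1) - x i) := Finset.sum_le_sum step
      _ = C3 * (x n - x 0) := by rw [← Finset.mul_sum, Finset.sum_range_sub]
      _ ≤ C3 * 1 := by
          apply mul_le_mul_of_nonneg_left _ hC3nn
          rw [hx0]; linarith [(hx01 n (by omega)).2]
      _ = C3 := mul_one C3
  -- rewrite the expression
  have hceq : ((↑(n+1):ℝ)) = (n:ℝ) + 1 := by push_cast; ring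
  have hexpr : (↑(n+1):ℝ) * ((β / ↑(n+1) - 1) * (1 / ((↑(n+1):ℝ) - 1)) * A
        + (1 / ((↑(n+1):ℝ) - 1)) * B)
      = (((n:ℝ)+1) / (n:ℝ)) * (β / ((n:ℝ)+1) * A - (f'' (ξ n) + D)) := by
    rw [← hABD, hceq]
    have h1 : ((n:ℝ)+1) - 1 = (n:ℝ) := by ring
    rw [h1]
    field_simp
    ring
  have hξnI : ξ n ∈ Icc (0:ℝ) 1 := hξI n (by omega)
  have hinner : |β / ((n:ℝ)+1) * A - (f'' (ξ n) + D)| ≤ β * C2 + (C2 + C3) := by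
    have t1 : |β / ((n:ℝ)+1) * A| ≤ β * C2 := by
      rw [abs_mul, abs_of_pos (div_pos hβ hc)]
      calc β / ((n:ℝ)+1) * |A| ≤ β / ((n:ℝ)+1) * (((n:ℝ)+1) * C2) :=
            mul_le_mul_of_nonneg_left hAbd (le_of_lt (div_pos hβ hc))
        _ = β * C2 := by field_simp
    have t2 : |f'' (ξ n) + D| ≤ C2 + C3 :=
      le_trans (abs_add_le _ _) (add_le_add (hC2 _ hξnI) hDbd)
    calc |β / ((n:ℝ)+1) * A - (f'' (ξ n) + D)|
        ≤ |β / ((n:ℝ)+1) * A| + |f'' (ξ n) + D| := abs_sub _ _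
      _ ≤ β * C2 + (C2 + C3) := add_le_add t1 t2
  rw [hexpr, abs_mul, abs_of_pos (div_pos hc hnn)]
  have hfinal : (((n:ℝ)+1) / (n:ℝ)) * (β * C2 + (C2 + C3))
      = C2 * ((↑(n+1):ℝ) * (β + 1) / ((↑(n+1):ℝ) - 1)) + C3 * ((↑(n+1):ℝ) / ((↑(n+1):ℝ) - 1)) := by
    rw [hceq]
    have h1 : ((n:ℝ)+1) - 1 = (n:ℝ) := by ring
    rw [h1]
    field_simp
    ring
  rw [← hfinal]
  exact mul_le_mul_of_nonneg_left hinner (le_of_lt (div_pos hc hnn))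
end

section
/- Let (Ω, 𝒟, μ) be a probability space and (ℱ_n)_{n∈ℕ} a sequence of sub-σ-algebras of 𝒟. Then the following are equivalent: (i) for every p ∈ [1,∞) and every f ∈ L^p(Ω, 𝒟, μ), the conditional expectations E[f | ℱ_n] converge to f in L^p as n → ∞; (ii) for every A ∈ 𝒟 there exists a sequence of sets A_n ∈ ℱ_n such that μ(A_n Δ A) → 0 as n → ∞. -/
open MeasureTheory Filter Topology ENNReal

private lemma tangent_rpow {r : ℝ} (hr : 1 ≤ r) {x q : ℝ} (hx : 0 ≤ x) (hq : 0 < q) :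
    q ^ r + r * q ^ (r - 1) * (x - q) ≤ x ^ r := by
  have hs : -1 ≤ x / q - 1 := by
    have : 0 ≤ x / q := div_nonneg hx hq.le
    linarith
  have hb := one_add_mul_self_le_rpow_one_add hs hr
  have hxq : (1 : ℝ) + (x / q - 1) = x / q := by ring
  rw [hxq, Real.div_rpow hx hq.le] at hb
  have hqr : 0 < q ^ r := Real.rpow_pos_of_pos hq r
  have key := mul_le_mul_of_nonneg_left hb hqr.le
  rw [mul_div_cancel₀ _ hqr.ne'] at key
  have hsub : q ^ (r - 1) = q ^ r / q := by
    rw [Real.rpow_sub hq, Real.rpow_one]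
  calc q ^ r + r * q ^ (r - 1) * (x - q)
      = q ^ r * (1 + r * (x / q - 1)) := by
        rw [hsub]; field_simp
    _ ≤ x ^ r := key

private lemma condExp_rpow_jensen {Ω : Type*} {m0 : MeasurableSpace Ω} {μ : Measure Ω}
    [IsProbabilityMeasure μ] {m : MeasurableSpace Ω} (hm : m ≤ m0) {r : ℝ} (hr : 1 ≤ r) {f : Ω → ℝ}
    (hf : Integrable f μ) (hf0 : ∀ ω, 0 ≤ f ω)
    (hfr : Integrable (fun ω => f ω ^ r) μ) :
    ∀ᵐ ω ∂μ, (μ[f|m]) ω ^ r ≤ (μ[fun ω => f ω ^ r|m]) ω := by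
  have hr0 : (0:ℝ) < r := zero_lt_one.trans_le hr
  have H : ∀ᵐ ω ∂μ, ∀ q : ℚ, 0 < (q:ℝ) →
      (q:ℝ) ^ r + r * (q:ℝ) ^ (r - 1) * ((μ[f|m]) ω - q) ≤ (μ[fun ω => f ω ^ r|m]) ω := by
    rw [ae_all_iff]
    intro q
    by_cases hq : 0 < (q:ℝ)
    swap
    · exact Eventually.of_forall fun ω h => absurd h hq
    set c : ℝ := (q:ℝ) ^ r - r * (q:ℝ) ^ (r - 1) * q with hc
    set d : ℝ := r * (q:ℝ) ^ (r - 1) with hd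
    have heq : (fun ω => (q:ℝ) ^ r + r * (q:ℝ) ^ (r - 1) * (f ω - q))
        = fun ω => c + d * f ω := by
      funext ω; simp only [hc, hd]; ring
    have hint : Integrable (fun ω => c + d * f ω) μ :=
      (integrable_const c).add (hf.const_mul d)
    have hmono : μ[fun ω => c + d * f ω|m] ≤ᵐ[μ] μ[fun ω => f ω ^ r|m] := by
      refine condExp_mono hint hfr (Eventually.of_forall fun ω => ?_)
      have := tangent_rpow hr (hf0 ω) hq
      calc c + d * f ω = (q:ℝ) ^ r + r * (q:ℝ) ^ (r - 1) * (f ω - q) := by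
            simp only [hc, hd]; ring
        _ ≤ f ω ^ r := this
    have hlin : μ[fun ω => c + d * f ω|m] =ᵐ[μ] fun ω => c + d * (μ[f|m]) ω := by
      have h1 : μ[fun ω => c + d * f ω|m] =ᵐ[μ]
          μ[fun _ => c|m] + μ[fun ω => d * f ω|m] :=
        condExp_add (integrable_const c) (hf.const_mul d) m
      have h2 : μ[fun ω => d * f ω|m] =ᵐ[μ] d • μ[f|m] := by
        exact condExp_smul (μ := μ) (m := m) d f
      filter_upwards [h1, h2] with ω hω1 hω2
      have hcc : μ[fun _ : Ω => c|m] = fun _ => c := condExp_const (μ := μ) hm c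
      rw [hω1]
      simp only [Pi.add_apply, hω2, hcc, Pi.smul_apply, smul_eq_mul]
    filter_upwards [hmono, hlin] with ω hω1 hω2 hqpos
    calc (q:ℝ) ^ r + r * (q:ℝ) ^ (r - 1) * ((μ[f|m]) ω - q)
        = c + d * (μ[f|m]) ω := by simp only [hc, hd]; ring
      _ = (μ[fun ω => c + d * f ω|m]) ω := hω2.symm
      _ ≤ (μ[fun ω => f ω ^ r|m]) ω := hω1
  have Hpos : 0 ≤ᵐ[μ] μ[fun ω => f ω ^ r|m] :=
    condExp_nonneg (Eventually.of_forall fun ω => Real.rpow_nonneg (hf0 ω) r)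
  have Hx : 0 ≤ᵐ[μ] μ[f|m] := condExp_nonneg (Eventually.of_forall hf0)
  filter_upwards [H, Hpos, Hx] with ω hω hω0 hx
  simp only [Pi.zero_apply] at hω0 hx
  set x := (μ[f|m]) ω with hxdef
  set C := (μ[fun ω => f ω ^ r|m]) ω with hC
  rcases eq_or_lt_of_le hx with hx0 | hxpos
  · rw [← hx0, Real.zero_rpow hr0.ne']
    exact hω0
  · -- approximate x by rationals from below
    have hex : ∀ n : ℕ, ∃ q : ℚ, x - 1/(n+1) < (q:ℝ) ∧ (q:ℝ) < x := fun n =>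
      exists_rat_btwn (sub_lt_self x (by positivity))
    choose q hq1 hq2 using hex
    have hqx : Tendsto (fun n => (q n : ℝ)) atTop (𝓝 x) := by
      refine tendsto_of_tendsto_of_tendsto_of_le_of_le (g := fun n : ℕ => x - 1/((n:ℝ)+1))
        ?_ tendsto_const_nhds (fun n => (hq1 n).le) (fun n => (hq2 n).le)
      have := tendsto_one_div_add_atTop_nhds_zero_nat (𝕜 := ℝ)
      simpa using tendsto_const_nhds.sub this
    have hqpos : ∀ᶠ n in atTop, 0 < ((q n : ℝ)) := (tendsto_order.1 hqx).1 0 hxpos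
    have T1 : Tendsto (fun n => ((q n : ℝ)) ^ r) atTop (𝓝 (x ^ r)) :=
      ((Real.continuousAt_rpow_const x r (Or.inl hxpos.ne')).tendsto).comp hqx
    have T2 : Tendsto (fun n => ((q n : ℝ)) ^ (r - 1)) atTop (𝓝 (x ^ (r - 1))) :=
      ((Real.continuousAt_rpow_const x (r - 1) (Or.inl hxpos.ne')).tendsto).comp hqx
    have TF : Tendsto (fun n => ((q n : ℝ)) ^ r + r * ((q n : ℝ)) ^ (r - 1) * (x - q n))
        atTop (𝓝 (x ^ r + r * x ^ (r - 1) * (x - x))) :=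
      T1.add (((tendsto_const_nhds.mul T2)).mul (tendsto_const_nhds.sub hqx))
    rw [sub_self, mul_zero, add_zero] at TF
    exact le_of_tendsto TF (hqpos.mono fun n hn => hω (q n) hn)

private lemma eLpNorm_condExp_le_of_memLp {Ω : Type*} {m0 : MeasurableSpace Ω} {μ : Measure Ω}
    [IsProbabilityMeasure μ] {m : MeasurableSpace Ω} (hm : m ≤ m0) {p : ℝ≥0∞}
    (hp1 : 1 ≤ p) (hp : p ≠ ⊤) {f : Ω → ℝ} (hf : MemLp f p μ) :
    eLpNorm (μ[f|m]) p μ ≤ eLpNorm f p μ := by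
  have hp0 : p ≠ 0 := fun h => by simp [h] at hp1
  set r := p.toReal with hrdef
  have hr1 : (1:ℝ) ≤ r := by
    rw [← ENNReal.toReal_one]
    exact ENNReal.toReal_mono hp hp1
  have hr0 : (0:ℝ) < r := zero_lt_one.trans_le hr1
  have hfi : Integrable f μ := hf.integrable hp1
  set g : Ω → ℝ := fun ω => |f ω| with hgdef
  have hgi : Integrable g μ := hfi.abs
  have hgr : Integrable (fun ω => g ω ^ r) μ := by
    simpa [hgdef, Real.norm_eq_abs] using hf.integrable_norm_rpow hp0 hp
  have habs : ∀ᵐ ω ∂μ, |(μ[f|m]) ω| ≤ (μ[g|m]) ω := by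
    filter_upwards [condExp_mono hfi hgi
        (Eventually.of_forall fun ω => le_abs_self (f ω)),
      EventuallyLE.trans (condExp_neg (μ := μ) (m := m) f).symm.le
        (condExp_mono hfi.neg hgi
          (Eventually.of_forall fun ω => neg_le_abs (f ω)))] with ω h1 h2
    simp only [Pi.neg_apply] at h2
    rw [abs_le]
    exact ⟨by linarith, h1⟩
  have hgc0 : 0 ≤ᵐ[μ] μ[g|m] :=
    condExp_nonneg (Eventually.of_forall fun ω => abs_nonneg (f ω))
  have hψ0 : 0 ≤ᵐ[μ] μ[fun ω => g ω ^ r|m] :=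
    condExp_nonneg (Eventually.of_forall fun ω => Real.rpow_nonneg (abs_nonneg (f ω)) r)
  have hjen := condExp_rpow_jensen hm hr1 hgi (fun ω => abs_nonneg (f ω)) hgr
  calc eLpNorm (μ[f|m]) p μ ≤ eLpNorm (μ[g|m]) p μ := by
        refine eLpNorm_mono_ae ?_
        filter_upwards [habs, hgc0] with ω h1 h2
        simp only [Pi.zero_apply] at h2
        rw [Real.norm_eq_abs, Real.norm_eq_abs, abs_of_nonneg h2]
        exact h1
    _ ≤ eLpNorm f p μ := by
        rw [eLpNorm_eq_lintegral_rpow_enorm_toReal hp0 hp, eLpNorm_eq_lintegral_rpow_enorm_toReal hp0 hp]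
        refine ENNReal.rpow_le_rpow ?_ (by positivity)
        calc ∫⁻ ω, (‖(μ[g|m]) ω‖₊ : ℝ≥0∞) ^ r ∂μ
            ≤ ∫⁻ ω, ENNReal.ofReal ((μ[fun ω => g ω ^ r|m]) ω) ∂μ := by
              refine lintegral_mono_ae ?_
              filter_upwards [hjen, hgc0, hψ0] with ω h1 h2 h3
              simp only [Pi.zero_apply] at h2 h3
              rw [← enorm_eq_nnnorm, ← ofReal_norm, Real.norm_eq_abs, abs_of_nonneg h2,
                ENNReal.ofReal_rpow_of_nonneg h2 hr0.le]
              exact ENNReal.ofReal_le_ofReal h1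
          _ = ENNReal.ofReal (∫ ω, (μ[fun ω => g ω ^ r|m]) ω ∂μ) :=
              (ofReal_integral_eq_lintegral_ofReal integrable_condExp hψ0).symm
          _ = ENNReal.ofReal (∫ ω, g ω ^ r ∂μ) := by rw [integral_condExp hm]
          _ = ∫⁻ ω, ENNReal.ofReal (g ω ^ r) ∂μ :=
              ofReal_integral_eq_lintegral_ofReal hgr
                (Eventually.of_forall fun ω => Real.rpow_nonneg (abs_nonneg (f ω)) r)
          _ = ∫⁻ ω, (‖f ω‖₊ : ℝ≥0∞) ^ r ∂μ := by
              refine lintegral_congr fun ω => ?_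
              simp only [hgdef]
              rw [← enorm_eq_nnnorm, ← ofReal_norm, Real.norm_eq_abs,
                ENNReal.ofReal_rpow_of_nonneg (abs_nonneg (f ω)) hr0.le]

private lemma indicator_condExp_tendsto {Ω : Type*} {m0 : MeasurableSpace Ω} {μ : Measure Ω}
    [IsProbabilityMeasure μ] {Fs : ℕ → MeasurableSpace Ω} (hle : ∀ n, Fs n ≤ m0)
    {p : ℝ≥0∞} (hp1 : 1 ≤ p) (hp : p ≠ ⊤) {A : Set Ω} (hA : MeasurableSet A)
    {As : ℕ → Set Ω} (hAs : ∀ n, MeasurableSet[Fs n] (As n))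
    (hT : Tendsto (fun n => μ (symmDiff (As n) A)) atTop (𝓝 0)) :
    Tendsto (fun n => eLpNorm (μ[A.indicator (fun _ => (1:ℝ))|Fs n]
      - A.indicator (fun _ => (1:ℝ))) p μ) atTop (𝓝 0) := by
  have hp0 : p ≠ 0 := fun h => by simp [h] at hp1
  set f₀ : Ω → ℝ := A.indicator fun _ => (1:ℝ) with hf₀def
  have hf₀m : MemLp f₀ p μ := (memLp_const 1).indicator hA
  have hf₀i : Integrable f₀ μ := hf₀m.integrable hp1
  have bound : ∀ n, eLpNorm (μ[f₀|Fs n] - f₀) p μ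
      ≤ 2 * μ (symmDiff (As n) A) ^ (1/p.toReal) := by
    intro n
    set gn : Ω → ℝ := (As n).indicator fun _ => (1:ℝ) with hgndef
    have hgm : StronglyMeasurable[Fs n] gn := stronglyMeasurable_const.indicator (hAs n)
    have hgmem : MemLp gn p μ := (memLp_const 1).indicator (hle n _ (hAs n))
    have hgi : Integrable gn μ := hgmem.integrable hp1
    have hce : μ[gn|Fs n] = gn := condExp_of_stronglyMeasurable (hle n) hgm hgi
    have hdecomp : μ[f₀|Fs n] - f₀ =ᵐ[μ] μ[f₀ - gn|Fs n] + (gn - f₀) := by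
      filter_upwards [condExp_sub (m := Fs n) hf₀i hgi] with ω hω
      simp only [Pi.sub_apply, Pi.add_apply, hω, hce]
      ring
    have hSm : MeasurableSet (symmDiff (As n) A) := ((hle n) _ (hAs n)).symmDiff hA
    have hnorm : ∀ ω, ‖(gn - f₀) ω‖
        ≤ ‖(symmDiff (As n) A).indicator (fun _ => (1:ℝ)) ω‖ := by
      intro ω
      by_cases h1 : ω ∈ As n <;> by_cases h2 : ω ∈ A <;>
        simp [hgndef, hf₀def, Set.indicator_apply, h1, h2, Set.mem_symmDiff]
    have hmono := eLpNorm_mono (p := p) (μ := μ) hnorm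
    rw [eLpNorm_indicator_const hSm hp0 hp] at hmono
    simp only [enorm_one, nnnorm_one, ENNReal.coe_one, one_mul] at hmono
    calc eLpNorm (μ[f₀|Fs n] - f₀) p μ
        = eLpNorm (μ[f₀ - gn|Fs n] + (gn - f₀)) p μ := eLpNorm_congr_ae hdecomp
      _ ≤ eLpNorm (μ[f₀ - gn|Fs n]) p μ + eLpNorm (gn - f₀) p μ :=
          eLpNorm_add_le (stronglyMeasurable_condExp.mono (hle n)).aestronglyMeasurable
            (hgmem.sub hf₀m).1 hp1
      _ ≤ eLpNorm (f₀ - gn) p μ + eLpNorm (gn - f₀) p μ :=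
          add_le_add_left (eLpNorm_condExp_le_of_memLp (hle n) hp1 hp (hf₀m.sub hgmem)) _
      _ = eLpNorm (gn - f₀) p μ + eLpNorm (gn - f₀) p μ := by rw [eLpNorm_sub_comm]
      _ ≤ μ (symmDiff (As n) A) ^ (1/p.toReal) + μ (symmDiff (As n) A) ^ (1/p.toReal) :=
          add_le_add hmono hmono
      _ = 2 * μ (symmDiff (As n) A) ^ (1/p.toReal) := (two_mul _).symm
  have h2 : Tendsto (fun n => 2 * μ (symmDiff (As n) A) ^ (1/p.toReal)) atTop (𝓝 0) := by
    have hrp : (0:ℝ) < 1/p.toReal := by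
      have := ENNReal.toReal_pos hp0 hp
      positivity
    have hrpow := hT.ennrpow_const (1/p.toReal)
    rw [ENNReal.zero_rpow_of_pos hrp] at hrpow
    simpa using ENNReal.Tendsto.const_mul hrpow (Or.inr ENNReal.ofNat_ne_top)
  exact tendsto_of_tendsto_of_tendsto_of_le_of_le tendsto_const_nhds h2
    (fun n => zero_le) bound

/-- Convergence of conditional expectations along a sequence of sub-σ-algebras:
`E[f | Fs_n] → f` in every `L^p`, `p ∈ [1,∞)`, if and only if every measurable set
can be approximated in measure by sets in `Fs_n`. -/
theorem condexp_Lp_convergence_iff_set_approx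
    {Ω : Type*} {m0 : MeasurableSpace Ω} (μ : Measure Ω) [IsProbabilityMeasure μ]
    (Fs : ℕ → MeasurableSpace Ω) (hle : ∀ n, Fs n ≤ m0) :
    (∀ p : ℝ≥0∞, 1 ≤ p → p ≠ ⊤ → ∀ f : Ω → ℝ, MemLp f p μ →
        Tendsto (fun n => eLpNorm (μ[f|Fs n] - f) p μ) atTop (𝓝 0))
    ↔ (∀ A : Set Ω, MeasurableSet A →
        ∃ As : ℕ → Set Ω, (∀ n, MeasurableSet[Fs n] (As n)) ∧
          Tendsto (fun n => μ (symmDiff (As n) A)) atTop (𝓝 0)) := by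
  constructor
  · -- forward
    intro h A hA
    set f : Ω → ℝ := A.indicator fun _ => (1:ℝ) with hfdef
    have hfm : MemLp f 1 μ := (memLp_const 1).indicator hA
    have hcond := h 1 le_rfl ENNReal.one_ne_top f hfm
    refine ⟨fun n => {ω | (1:ℝ)/2 ≤ (μ[f|Fs n]) ω}, fun n => ?_, ?_⟩
    · exact (stronglyMeasurable_condExp (m := Fs n)).measurable measurableSet_Ici
    · have bound : ∀ n, μ (symmDiff {ω | (1:ℝ)/2 ≤ (μ[f|Fs n]) ω} A)
          ≤ 2 * eLpNorm (μ[f|Fs n] - f) 1 μ := by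
        intro n
        set S := symmDiff {ω | (1:ℝ)/2 ≤ (μ[f|Fs n]) ω} A with hSdef
        have hAsm : MeasurableSet {ω | (1:ℝ)/2 ≤ (μ[f|Fs n]) ω} :=
          hle n _ ((stronglyMeasurable_condExp (m := Fs n)).measurable measurableSet_Ici)
        have hSm : MeasurableSet S := hAsm.symmDiff hA
        have hptwise : ∀ ω ∈ S, (1:ℝ)/2 ≤ |(μ[f|Fs n]) ω - f ω| := by
          intro ω hω
          rw [hSdef, Set.mem_symmDiff] at hω
          rcases hω with ⟨h1, h2⟩ | ⟨h2, h1⟩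
          · have hfω : f ω = 0 := Set.indicator_of_notMem h2 _
            rw [hfω, sub_zero]
            exact le_abs_self _ |>.trans' h1
          · have hfω : f ω = 1 := Set.indicator_of_mem h2 _
            have h1' : (μ[f|Fs n]) ω < 1/2 := lt_of_not_ge h1
            rw [hfω, abs_sub_comm]
            rw [abs_of_nonneg (by linarith)]
            linarith
        have hmeas0 : Measurable fun ω => (‖(μ[f|Fs n]) ω - f ω‖₊ : ℝ≥0∞) :=
          ((stronglyMeasurable_condExp (μ := μ) (f := f).mono (hle n)).measurable.sub
            (measurable_const.indicator hA)).enorm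
        have hmeas : Measurable fun ω => (2:ℝ≥0∞) * ‖(μ[f|Fs n]) ω - f ω‖₊ :=
          hmeas0.const_mul 2
        calc μ S = ∫⁻ _ in S, 1 ∂μ := (setLIntegral_one S).symm
          _ ≤ ∫⁻ ω in S, 2 * ‖(μ[f|Fs n]) ω - f ω‖₊ ∂μ := by
              refine setLIntegral_mono hmeas fun ω hω => ?_
              have := hptwise ω hω
              calc (1:ℝ≥0∞) = ENNReal.ofReal 1 := by simp
                _ ≤ ENNReal.ofReal (2 * |(μ[f|Fs n]) ω - f ω|) :=
                    ENNReal.ofReal_le_ofReal (by linarith)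
                _ = 2 * ‖(μ[f|Fs n]) ω - f ω‖₊ := by
                    rw [ENNReal.ofReal_mul zero_le_two, ← Real.norm_eq_abs,
                      ofReal_norm, enorm_eq_nnnorm]
                    norm_num
          _ ≤ ∫⁻ ω, 2 * ‖(μ[f|Fs n]) ω - f ω‖₊ ∂μ := setLIntegral_le_lintegral _ _
          _ = 2 * ∫⁻ ω, ‖(μ[f|Fs n]) ω - f ω‖₊ ∂μ := lintegral_const_mul 2 hmeas0
          _ = 2 * eLpNorm (μ[f|Fs n] - f) 1 μ := by
              rw [eLpNorm_one_eq_lintegral_enorm]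
              simp only [Pi.sub_apply, enorm_eq_nnnorm]
      have h2 : Tendsto (fun n => 2 * eLpNorm (μ[f|Fs n] - f) 1 μ) atTop (𝓝 0) := by
        simpa using ENNReal.Tendsto.const_mul hcond (Or.inr ENNReal.ofNat_ne_top)
      exact tendsto_of_tendsto_of_tendsto_of_le_of_le tendsto_const_nhds h2
        (fun n => zero_le) bound
  · -- backward
    intro h p hp1 hp f hf
    have hp0 : p ≠ 0 := fun h' => by simp [h'] at hp1
    -- convergence for simple functions, carrying MemLp
    have hsimple : ∀ g : SimpleFunc Ω ℝ, MemLp (⇑g) p μ ∧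
        Tendsto (fun n => eLpNorm (μ[⇑g|Fs n] - ⇑g) p μ) atTop (𝓝 0) := by
      intro g
      refine SimpleFunc.induction ?_ ?_ g
      · intro c s hs
        have hcoe : ⇑(SimpleFunc.piecewise s hs (SimpleFunc.const Ω c)
            (SimpleFunc.const Ω 0)) = s.indicator fun _ => c := by
          funext ω
          by_cases hω : ω ∈ s <;>
            simp [SimpleFunc.piecewise_apply, Set.indicator_apply, hω]
        rw [hcoe]
        constructor
        · exact (memLp_const c).indicator hs
        · obtain ⟨As, hAs, hT⟩ := h s hs
          have hkey := indicator_condExp_tendsto hle hp1 hp hs hAs hT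
          have hsmul : (s.indicator fun _ => c) = c • s.indicator fun _ => (1:ℝ) := by
            funext ω
            by_cases hω : ω ∈ s <;> simp [Set.indicator_apply, hω]
          rw [hsmul]
          have hdiff : ∀ n, μ[c • s.indicator fun _ => (1:ℝ)|Fs n]
              - c • s.indicator (fun _ => (1:ℝ))
              =ᵐ[μ] c • (μ[s.indicator fun _ => (1:ℝ)|Fs n] - s.indicator fun _ => (1:ℝ)) := by
            intro n
            filter_upwards [condExp_smul (μ := μ) (m := Fs n) c
              (s.indicator fun _ => (1:ℝ))] with ω hω
            simp only [Pi.sub_apply, Pi.smul_apply, hω, smul_eq_mul]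
            ring
          have : ∀ n, eLpNorm (μ[c • s.indicator fun _ => (1:ℝ)|Fs n]
              - c • s.indicator (fun _ => (1:ℝ))) p μ
              = ‖c‖₊ * eLpNorm (μ[s.indicator fun _ => (1:ℝ)|Fs n]
                - s.indicator fun _ => (1:ℝ)) p μ := by
            intro n
            rw [eLpNorm_congr_ae (hdiff n), eLpNorm_const_smul, enorm_eq_nnnorm]
          simp only [this]
          simpa using ENNReal.Tendsto.const_mul hkey (Or.inr ENNReal.coe_ne_top)
      · intro g₁ g₂ _ h₁ h₂
        obtain ⟨hm₁, ht₁⟩ := h₁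
        obtain ⟨hm₂, ht₂⟩ := h₂
        refine ⟨by simpa [SimpleFunc.coe_add] using hm₁.add hm₂, ?_⟩
        have hi₁ : Integrable (⇑g₁) μ := hm₁.integrable hp1
        have hi₂ : Integrable (⇑g₂) μ := hm₂.integrable hp1
        have hdiff : ∀ n, μ[⇑(g₁ + g₂)|Fs n] - ⇑(g₁ + g₂)
            =ᵐ[μ] (μ[⇑g₁|Fs n] - ⇑g₁) + (μ[⇑g₂|Fs n] - ⇑g₂) := by
          intro n
          have : ⇑(g₁ + g₂) = ⇑g₁ + ⇑g₂ := SimpleFunc.coe_add _ _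
          rw [this]
          filter_upwards [condExp_add (μ := μ) (m := Fs n) hi₁ hi₂] with ω hω
          simp only [Pi.sub_apply, Pi.add_apply, hω]
          ring
        have hb : ∀ n, eLpNorm (μ[⇑(g₁ + g₂)|Fs n] - ⇑(g₁ + g₂)) p μ
            ≤ eLpNorm (μ[⇑g₁|Fs n] - ⇑g₁) p μ + eLpNorm (μ[⇑g₂|Fs n] - ⇑g₂) p μ := by
          intro n
          rw [eLpNorm_congr_ae (hdiff n)]
          refine eLpNorm_add_le ?_ ?_ hp1
          · exact ((stronglyMeasurable_condExp.mono (hle n)).aestronglyMeasurable.sub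
              hm₁.1)
          · exact ((stronglyMeasurable_condExp.mono (hle n)).aestronglyMeasurable.sub
              hm₂.1)
        have hsum : Tendsto (fun n => eLpNorm (μ[⇑g₁|Fs n] - ⇑g₁) p μ
            + eLpNorm (μ[⇑g₂|Fs n] - ⇑g₂) p μ) atTop (𝓝 0) := by
          simpa using ht₁.add ht₂
        exact tendsto_of_tendsto_of_tendsto_of_le_of_le tendsto_const_nhds hsum
          (fun n => zero_le) hb
    -- density argument
    rw [ENNReal.tendsto_nhds_zero]
    intro ε hε
    have hε3 : ε / 3 ≠ 0 := by
      simp only [ne_eq, ENNReal.div_eq_zero_iff, not_or]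
      exact ⟨hε.ne', ENNReal.ofNat_ne_top⟩
    obtain ⟨g, hg, hgm⟩ := hf.exists_simpleFunc_eLpNorm_sub_lt hp hε3
    have hfi : Integrable f μ := hf.integrable hp1
    have hgi : Integrable (⇑g) μ := hgm.integrable hp1
    obtain ⟨-, hgt⟩ := hsimple g
    filter_upwards [hgt.eventually_lt_const (by exact ENNReal.div_pos hε.ne' ENNReal.ofNat_ne_top :
      (0:ℝ≥0∞) < ε / 3)] with n hn
    have hdecomp : μ[f|Fs n] - f
        =ᵐ[μ] μ[f - ⇑g|Fs n] + ((μ[⇑g|Fs n] - ⇑g) + (⇑g - f)) := by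
      filter_upwards [condExp_sub (μ := μ) (m := Fs n) hfi hgi] with ω hω
      simp only [Pi.sub_apply, Pi.add_apply, hω]
      ring
    calc eLpNorm (μ[f|Fs n] - f) p μ
        = eLpNorm (μ[f - ⇑g|Fs n] + ((μ[⇑g|Fs n] - ⇑g) + (⇑g - f))) p μ :=
          eLpNorm_congr_ae hdecomp
      _ ≤ eLpNorm (μ[f - ⇑g|Fs n]) p μ
          + eLpNorm ((μ[⇑g|Fs n] - ⇑g) + (⇑g - f)) p μ := by
          refine eLpNorm_add_le (stronglyMeasurable_condExp.mono (hle n)).aestronglyMeasurable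
            (((stronglyMeasurable_condExp.mono (hle n)).aestronglyMeasurable.sub hgm.1).add
              (hgm.1.sub hf.1)) hp1
      _ ≤ eLpNorm (μ[f - ⇑g|Fs n]) p μ + (eLpNorm (μ[⇑g|Fs n] - ⇑g) p μ
          + eLpNorm (⇑g - f) p μ) := by
          refine add_le_add_right (eLpNorm_add_le
            ((stronglyMeasurable_condExp.mono (hle n)).aestronglyMeasurable.sub hgm.1)
            (hgm.1.sub hf.1) hp1) _
      _ ≤ ε/3 + (ε/3 + ε/3) := by
          refine add_le_add ?_ (add_le_add hn.le ?_)
          · exact (eLpNorm_condExp_le_of_memLp (hle n) hp1 hp (hf.sub hgm)).trans hg.le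
          · rw [eLpNorm_sub_comm]
            exact hg.le
      _ = ε := by rw [← add_assoc, ENNReal.add_thirds]
end
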